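/- Stability of spin q-Whittaker polynomials: with $\mathbb{F}_{\lambda/\mu}(x_1,\dots,x_m) = \sum_{\mu = \nu^{(0)} \prec \cdots \prec \nu^{(m)} = \lambda} \prod_{i=1}^m \mathbb{F}_{\nu^{(i)}/\nu^{(i-1)}}(x_i)$, one has $\mathbb{F}_{\lambda/\mu}(x_1,\dots,x_{m-1},-s) = \mathbb{F}_{\lambda/\mu}(x_1,\dots,x_{m-1})$ for all partitions $\lambda \supset \mu$. -/

import Mathlib

/-- The finite q-Pochhammer symbol `(a;q)_m = ∏_{i<m} (1 - a q^i)`. -/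
noncomputable def qPoch (q a : ℂ) (m : ℕ) : ℂ := ∏ i ∈ Finset.range m, (1 - a * q ^ i)

/-- `xPoch q s x k = x^k (-s/x;q)_k = ∏_{j<k} (x + s q^j)`, interpreted polynomially. -/
noncomputable def xPoch (q s x : ℂ) (k : ℕ) : ℂ := ∏ j ∈ Finset.range k, (x + s * q ^ j)

/-- `μ ≻ ν`: the partition `μ` interlaces `ν`, i.e. `μ_i ≥ ν_i ≥ μ_{i+1}` (0-indexed parts). -/
def Interlace (μ ν : ℕ → ℕ) : Prop := ∀ i, ν i ≤ μ i ∧ μ (i + 1) ≤ ν i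

open Classical in
/-- The one-variable skew spin q-Whittaker polynomial `𝔽_{μ/ν}(x)`, with
`x^{|μ|-|ν|} (-s/x;q)_{μ_i-ν_i}` interpreted polynomially via `xPoch`. -/
noncomputable def sqW1 (q s x : ℂ) (μ ν : ℕ → ℕ) : ℂ :=
  if Interlace μ ν then
    ∏ᶠ i, xPoch q s x (μ i - ν i) * qPoch q (-s * x) (ν i - μ (i + 1)) *
        qPoch q q (μ i - μ (i + 1)) /
      (qPoch q q (μ i - ν i) * qPoch q q (ν i - μ (i + 1)) * qPoch q (s ^ 2) (μ i - μ (i + 1)))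
  else 0

open Classical in
/-- The skew spin q-Whittaker polynomial `𝔽_{λ/μ}(x_1,…,x_m)` as a sum over interlacing
chains `μ = ν⁽⁰⁾ ≺ ν⁽¹⁾ ≺ ⋯ ≺ ν⁽ᵐ⁾ = λ`. -/
noncomputable def sqWFskew (q s : ℂ) (m : ℕ) (μ lam : ℕ → ℕ) (x : Fin m → ℂ) : ℂ :=
  ∑ᶠ c : Fin (m + 1) → ℕ → ℕ,
    if c 0 = μ ∧ c (Fin.last m) = lam then
      ∏ i : Fin m, sqW1 q s (x i) (c i.succ) (c i.castSucc)
    else 0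

lemma qPoch_zero (q a : ℂ) : qPoch q a 0 = 1 := by simp [qPoch]

lemma xPoch_zero (q s x : ℂ) : xPoch q s x 0 = 1 := by simp [xPoch]

/-- An antitone ℕ-valued sequence is eventually constant. -/
lemma antitone_eventually_const (f : ℕ → ℕ) (hf : Antitone f) :
    ∃ N, ∀ n, N ≤ n → f n = f N := by
  obtain ⟨N, hN⟩ := Nat.sInf_mem (Set.range_nonempty f)
  refine ⟨N, fun n hn => le_antisymm (hf hn) ?_⟩
  rw [hN]
  exact Nat.sInf_le ⟨n, rfl⟩

open Classical in
/-- `𝔽_{μ/ν}(-s)` is `1` if `μ = ν` (and `μ` is a genuine partition) and `0` otherwise. -/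
lemma sqW1_neg_s (q s : ℂ) (hq : ∀ k, qPoch q q k ≠ 0) (hs : ∀ k, qPoch q (s ^ 2) k ≠ 0)
    (ν ρ : ℕ → ℕ) : sqW1 q s (-s) ν ρ = if ν = ρ ∧ Antitone ν then 1 else 0 := by
  by_cases hI : Interlace ν ρ
  · have hanti : Antitone ν := antitone_nat_of_succ_le fun i => le_trans (hI i).2 (hI i).1
    by_cases heq : ν = ρ
    · subst heq
      rw [sqW1, if_pos hI, if_pos ⟨rfl, hanti⟩]
      have h1 : ∀ i : ℕ,
          xPoch q s (-s) (ν i - ν i) * qPoch q (-s * -s) (ν i - ν (i + 1)) *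
              qPoch q q (ν i - ν (i + 1)) /
            (qPoch q q (ν i - ν i) * qPoch q q (ν i - ν (i + 1)) *
              qPoch q (s ^ 2) (ν i - ν (i + 1))) = 1 := by
        intro i
        rw [Nat.sub_self, xPoch_zero, qPoch_zero, show (-s * -s) = s ^ 2 by ring,
          one_mul, one_mul]
        rw [div_eq_one_iff_eq (mul_ne_zero (hq _) (hs _))]
        ring
      rw [finprod_congr h1, finprod_one]
    · rw [sqW1, if_pos hI, if_neg (by simp [heq])]
      obtain ⟨i0, hi0⟩ := Function.ne_iff.1 heq
      have hlt : ρ i0 < ν i0 := lt_of_le_of_ne (hI i0).1 (Ne.symm hi0)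
      set F : ℕ → ℂ := fun i =>
        xPoch q s (-s) (ν i - ρ i) * qPoch q (-s * -s) (ρ i - ν (i + 1)) *
            qPoch q q (ν i - ν (i + 1)) /
          (qPoch q q (ν i - ρ i) * qPoch q q (ρ i - ν (i + 1)) *
            qPoch q (s ^ 2) (ν i - ν (i + 1))) with hF
      have hx0 : xPoch q s (-s) (ν i0 - ρ i0) = 0 := by
        apply Finset.prod_eq_zero (i := 0)
        · simpa using Nat.sub_pos_of_lt hlt
        · simp
      have hFi0 : F i0 = 0 := by rw [hF]; simp [hx0]
      obtain ⟨N, hN⟩ := antitone_eventually_const ν hanti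
      have hsupp : Function.mulSupport F ⊆ Set.Iio N := by
        intro i hi
        by_contra hiN
        apply hi
        have hNi : N ≤ i := le_of_not_gt (by simpa using hiN)
        have h1 : ν i = ν N := hN i hNi
        have h2 : ν (i + 1) = ν N := hN (i + 1) (le_trans hNi (Nat.le_succ i))
        have h3 : ρ i = ν N := le_antisymm (h1 ▸ (hI i).1) (h2 ▸ (hI i).2)
        show F i = 1
        rw [hF]
        simp only [h1, h2, h3, Nat.sub_self, xPoch_zero, qPoch_zero]
        simp
      exact finprod_eq_zero F i0 hFi0 (Set.Finite.subset (Set.finite_Iio N) hsupp)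
  · rw [sqW1, if_neg hI, if_neg]
    rintro ⟨rfl, ha⟩
    exact hI fun i => ⟨le_rfl, ha (Nat.le_succ i)⟩

/-- Stability: `𝔽_{λ/μ}(x_1,…,x_{m-1},-s) = 𝔽_{λ/μ}(x_1,…,x_{m-1})`. -/
theorem stmt9 (q s : ℂ) (m : ℕ) (μ lam : ℕ → ℕ)
    (hμ : Antitone μ) (hlam : Antitone lam)
    (hμ0 : ∀ᶠ i in Filter.atTop, μ i = 0) (hlam0 : ∀ᶠ i in Filter.atTop, lam i = 0)
    (hsub : ∀ i, μ i ≤ lam i)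
    (hq : ∀ k, qPoch q q k ≠ 0) (hs : ∀ k, qPoch q (s ^ 2) k ≠ 0)
    (x : Fin m → ℂ) :
    sqWFskew q s (m + 1) μ lam (Fin.snoc x (-s)) = sqWFskew q s m μ lam x := by
  classical
  set φ : (Fin (m + 1) → ℕ → ℕ) → (Fin (m + 2) → ℕ → ℕ) := fun d => Fin.snoc d lam with hφdef
  have hφinj : Function.Injective φ := by
    intro d d' h
    funext i
    have := congrFun h i.castSucc
    simpa [hφdef, Fin.snoc_castSucc] using this
  set F : (Fin (m + 2) → ℕ → ℕ) → ℂ := fun c =>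
    if c 0 = μ ∧ c (Fin.last (m + 1)) = lam then
      ∏ i : Fin (m + 1), sqW1 q s ((Fin.snoc x (-s) : Fin (m + 1) → ℂ) i) (c i.succ) (c i.castSucc)
    else 0 with hFdef
  have hrange : ∀ c, F c ≠ 0 → c ∈ Set.range φ := by
    intro c hc
    have hcl : c (Fin.last (m + 1)) = lam := by
      by_contra h
      exact hc (by rw [hFdef]; simp [h])
    refine ⟨fun i => c i.castSucc, funext fun i => ?_⟩
    refine Fin.lastCases ?_ (fun j => ?_) i
    · simp [hφdef, Fin.snoc_last, hcl]
    · simp [hφdef, Fin.snoc_castSucc]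
  have step1 : sqWFskew q s (m + 1) μ lam (Fin.snoc x (-s)) = ∑ᶠ c, F c := rfl
  have step2 : (∑ᶠ c, F c) = ∑ᶠ c ∈ Set.range φ, F c := by
    rw [← finsum_mem_univ]
    exact finsum_mem_inter_support_eq' F _ _ fun c hc => by
      simp [hrange c hc]
  have step3 : (∑ᶠ c ∈ Set.range φ, F c) = ∑ᶠ d, F (φ d) := finsum_mem_range hφinj
  have step4 : ∀ d : Fin (m + 1) → ℕ → ℕ,
      F (φ d) = if d 0 = μ ∧ d (Fin.last m) = lam then
        ∏ i : Fin m, sqW1 q s (x i) (d i.succ) (d i.castSucc) else 0 := by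
    intro d
    have h0 : φ d 0 = d 0 := by
      show (Fin.snoc d lam : Fin (m + 2) → ℕ → ℕ) 0 = d 0
      rw [show (0 : Fin (m + 2)) = Fin.castSucc 0 from (Fin.castSucc_zero).symm,
        Fin.snoc_castSucc]
    have hlast : φ d (Fin.last (m + 1)) = lam := Fin.snoc_last _ _
    rw [hFdef]
    simp only [h0, hlast, and_true]
    by_cases h0μ : d 0 = μ
    · rw [if_pos h0μ, Fin.prod_univ_castSucc]
      have hfac : ∀ i : Fin m,
          sqW1 q s ((Fin.snoc x (-s) : Fin (m + 1) → ℂ) i.castSucc) (φ d i.castSucc.succ) (φ d i.castSucc.castSucc)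
            = sqW1 q s (x i) (d i.succ) (d i.castSucc) := by
        intro i
        rw [hφdef]
        simp [Fin.snoc_castSucc, Fin.succ_castSucc, -Fin.castSucc_succ]
      have hlastfac :
          sqW1 q s ((Fin.snoc x (-s) : Fin (m + 1) → ℂ) (Fin.last m)) (φ d (Fin.last m).succ)
              (φ d (Fin.last m).castSucc)
            = if lam = d (Fin.last m) then 1 else 0 := by
        rw [hφdef]
        simp only [Fin.snoc_last, Fin.succ_last, Fin.snoc_castSucc]
        rw [sqW1_neg_s q s hq hs]
        by_cases h : lam = d (Fin.last m)
        · rw [if_pos h, if_pos ⟨h, hlam⟩]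
        · rw [if_neg h, if_neg (by tauto)]
      rw [Finset.prod_congr rfl (fun i _ => hfac i), hlastfac]
      by_cases h : d (Fin.last m) = lam
      · rw [if_pos h.symm, if_pos ⟨h0μ, h⟩, mul_one]
      · rw [if_neg (fun hh => h hh.symm), if_neg (by tauto), mul_zero]
    · rw [if_neg h0μ, if_neg (by tauto)]
  rw [step1, step2, step3, finsum_congr step4]
  rfl
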